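/- Let {x^k} satisfy for all k and all x ∈ ℝⁿ the inequality ‖x^{k+1} − B_μ(x^k)‖₂² + λμ Σᵢ |x^{k+1}ᵢ|/(|x^kᵢ| + εᵢ)^{1−p} ≤ ‖x − B_μ(x^k)‖₂² + λμ Σᵢ |xᵢ|/(|x^kᵢ| + εᵢ)^{1−p}, where B_μ(y) = y + μAᵀ(b − Ay). If a subsequence x^{k_j} → x* and x^{k_j+1} → x*, then x* satisfies ‖x* − B_μ(x*)‖₂² + λμ Σᵢ |xᵢ*|/(|xᵢ*| + εᵢ)^{1−p} ≤ ‖x − B_μ(x*)‖₂² + λμ Σᵢ |xᵢ|/(|xᵢ*| + εᵢ)^{1−p} for all x ∈ ℝⁿ; hence x* is a fixed point of the thresholding map: xᵢ* = sign([B_μ(x*)]ᵢ)·max{|[B_μ(x*)]ᵢ| − λμ/(2(|xᵢ*| + εᵢ)^{1−p}), 0}. -/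

import Mathlib

open Filter

lemma scalar_min {c w s : ℝ} (hw : 0 < w)
    (hmin : ∀ t : ℝ, (s - c)^2 + w * |s| ≤ (t - c)^2 + w * |t|) :
    s = Real.sign c * max (|c| - w/2) 0 := by
  set T := Real.sign c * max (|c| - w/2) 0 with hT
  have hTmin : ∀ t : ℝ, (T - c)^2 + w * |T| ≤ (t - c)^2 + w * |t| := by
    intro t
    rcases le_total (|c|) (w/2) with h | h
    · have hT0 : T = 0 := by
        rw [hT, max_eq_right (by linarith), mul_zero]
      rw [hT0, abs_zero]
      have h1 := le_abs_self (t*c)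
      have h2 := abs_mul t c
      have h3 : 0 ≤ |t| * (w - 2*|c|) := mul_nonneg (abs_nonneg t) (by linarith)
      nlinarith [sq_nonneg t, sq_abs t]
    · rcases lt_trichotomy c 0 with hc | hc | hc
      · have : Real.sign c = -1 := Real.sign_of_neg hc
        have habs : |c| = -c := abs_of_neg hc
        have hTval : T = c + w/2 := by rw [hT, this, habs, max_eq_left (by linarith)]; ring
        rw [hTval, abs_of_nonpos (show c + w/2 ≤ 0 by rw [habs] at h; linarith)]
        nlinarith [neg_abs_le t, sq_nonneg (t - c - w/2)]
      · exfalso; rw [hc, abs_zero] at h; linarith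
      · have : Real.sign c = 1 := Real.sign_of_pos hc
        have habs : |c| = c := abs_of_pos hc
        have hTval : T = c - w/2 := by rw [hT, this, habs, max_eq_left (by linarith)]; ring
        rw [hTval, abs_of_nonneg (show 0 ≤ c - w/2 by rw [habs] at h; linarith)]
        nlinarith [le_abs_self t, sq_nonneg (t - c + w/2)]
  have hEq : (s - c)^2 + w * |s| = (T - c)^2 + w * |T| :=
    le_antisymm (hmin T) (hTmin s)
  have hmid := hmin ((s + T)/2)
  have h2 : |(s + T)/2| ≤ (|s| + |T|)/2 := by
    rw [abs_div, abs_of_pos (by norm_num : (0:ℝ) < 2)]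
    exact div_le_div_of_nonneg_right (abs_add_le s T) (by norm_num)
  have : (s - T)^2 ≤ 0 := by nlinarith
  have := sq_eq_zero_iff.mp (le_antisymm this (sq_nonneg _))
  linarith

/-- Limit points of the IT iteration are fixed points of the thresholding map. -/
theorem limit_point_is_fixed_point (m n : ℕ)
    (A : EuclideanSpace ℝ (Fin n) →L[ℝ] EuclideanSpace ℝ (Fin m))
    (b : EuclideanSpace ℝ (Fin m)) (lam μ p : ℝ) (ε : Fin n → ℝ)
    (hlam : 0 < lam) (hμ : 0 < μ) (hp : 0 < p) (hp1 : p < 1)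
    (hε : ∀ i, 0 < ε i)
    (B : EuclideanSpace ℝ (Fin n) → EuclideanSpace ℝ (Fin n))
    (hB : ∀ y, B y = y + μ • (ContinuousLinearMap.adjoint A) (b - A y))
    (X : ℕ → EuclideanSpace ℝ (Fin n))
    (hIter : ∀ k, ∀ x : EuclideanSpace ℝ (Fin n),
      ‖X (k + 1) - B (X k)‖ ^ 2
          + lam * μ * ∑ i, |X (k + 1) i| / (|X k i| + ε i) ^ (1 - p)
        ≤ ‖x - B (X k)‖ ^ 2 + lam * μ * ∑ i, |x i| / (|X k i| + ε i) ^ (1 - p))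
    (φ : ℕ → ℕ) (hφ : StrictMono φ)
    (xstar : EuclideanSpace ℝ (Fin n))
    (hsub : Tendsto (fun j => X (φ j)) atTop (nhds xstar))
    (hsub' : Tendsto (fun j => X (φ j + 1)) atTop (nhds xstar)) :
    (∀ x : EuclideanSpace ℝ (Fin n),
      ‖xstar - B xstar‖ ^ 2
          + lam * μ * ∑ i, |xstar i| / (|xstar i| + ε i) ^ (1 - p)
        ≤ ‖x - B xstar‖ ^ 2 + lam * μ * ∑ i, |x i| / (|xstar i| + ε i) ^ (1 - p)) ∧
    ∀ i, xstar i = Real.sign (B xstar i) *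
      max (|B xstar i| - lam * μ / (2 * (|xstar i| + ε i) ^ (1 - p))) 0 := by
  have hBdef : B = fun y => y + μ • (ContinuousLinearMap.adjoint A) (b - A y) := funext hB
  have hBcont : Continuous B := by
    rw [hBdef]
    exact continuous_id.add
      (((ContinuousLinearMap.adjoint A).continuous.comp
        (continuous_const.sub A.continuous)).const_smul μ)
  have hd : ∀ i, (0:ℝ) < (|xstar i| + ε i) ^ (1 - p) := fun i =>
    Real.rpow_pos_of_pos (by have := hε i; positivity) _
  -- coordinate convergence
  have hcoord : ∀ i, Tendsto (fun j => X (φ j) i) atTop (nhds (xstar i)) :=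
    fun i => ((PiLp.continuous_apply 2 _ i).tendsto xstar).comp hsub
  have hcoord' : ∀ i, Tendsto (fun j => X (φ j + 1) i) atTop (nhds (xstar i)) :=
    fun i => ((PiLp.continuous_apply 2 _ i).tendsto xstar).comp hsub'
  have hBx : Tendsto (fun j => B (X (φ j))) atTop (nhds (B xstar)) :=
    (hBcont.tendsto xstar).comp hsub
  have hden : ∀ i, Tendsto (fun j => (|X (φ j) i| + ε i) ^ (1 - p)) atTop
      (nhds ((|xstar i| + ε i) ^ (1 - p))) := by
    intro i
    exact ((Real.continuousAt_rpow_const _ (1 - p)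
      (Or.inl (by have := hε i; positivity))).tendsto).comp
      (((hcoord i).abs).add tendsto_const_nhds)
  have key : ∀ x : EuclideanSpace ℝ (Fin n),
      ‖xstar - B xstar‖ ^ 2
          + lam * μ * ∑ i, |xstar i| / (|xstar i| + ε i) ^ (1 - p)
        ≤ ‖x - B xstar‖ ^ 2 + lam * μ * ∑ i, |x i| / (|xstar i| + ε i) ^ (1 - p) := by
    intro x
    have hl : Tendsto (fun j => ‖X (φ j + 1) - B (X (φ j))‖ ^ 2
        + lam * μ * ∑ i, |X (φ j + 1) i| / (|X (φ j) i| + ε i) ^ (1 - p)) atTop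
        (nhds (‖xstar - B xstar‖ ^ 2
        + lam * μ * ∑ i, |xstar i| / (|xstar i| + ε i) ^ (1 - p))) := by
      refine Tendsto.add (((hsub'.sub hBx).norm).pow 2) (Tendsto.const_mul _ ?_)
      exact tendsto_finset_sum _ fun i _ =>
        ((hcoord' i).abs).div (hden i) (ne_of_gt (hd i))
    have hr : Tendsto (fun j => ‖x - B (X (φ j))‖ ^ 2
        + lam * μ * ∑ i, |x i| / (|X (φ j) i| + ε i) ^ (1 - p)) atTop
        (nhds (‖x - B xstar‖ ^ 2
        + lam * μ * ∑ i, |x i| / (|xstar i| + ε i) ^ (1 - p))) := by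
      refine Tendsto.add (((tendsto_const_nhds.sub hBx).norm).pow 2)
        (Tendsto.const_mul _ ?_)
      exact tendsto_finset_sum _ fun i _ =>
        tendsto_const_nhds.div (hden i) (ne_of_gt (hd i))
    exact le_of_tendsto_of_tendsto' hl hr fun j => hIter (φ j) x
  refine ⟨key, fun i => ?_⟩
  -- expand norms as sums of squares
  have hnorm : ∀ y : EuclideanSpace ℝ (Fin n), ‖y‖ ^ 2 = ∑ j, (y j) ^ 2 := by
    intro y
    rw [EuclideanSpace.norm_eq, Real.sq_sqrt (Finset.sum_nonneg fun j _ => sq_nonneg _)]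
    simp [Real.norm_eq_abs, sq_abs]
  set F := fun (j : Fin n) (s : ℝ) =>
    (s - B xstar j) ^ 2 + lam * μ * (|s| / (|xstar j| + ε j) ^ (1 - p)) with hF
  have hkey2 : ∀ t : ℝ, F i (xstar i) ≤ F i t := by
    intro t
    have h := key (WithLp.toLp 2 (Function.update xstar i t))
    rw [hnorm, hnorm, Finset.mul_sum, Finset.mul_sum] at h
    rw [← Finset.sum_add_distrib, ← Finset.sum_add_distrib] at h
    have h' : ∑ j, F j (xstar j) ≤ ∑ j, F j (Function.update xstar i t j) := by
      refine le_of_le_of_eq (le_of_eq_of_le ?_ h) ?_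
      · exact Finset.sum_congr rfl fun j _ => by simp [hF]
      · exact Finset.sum_congr rfl fun j _ => by simp [hF]
    have e1 : ∑ j ∈ Finset.univ.erase i, F j (Function.update xstar i t j)
        = ∑ j ∈ Finset.univ.erase i, F j (xstar j) :=
      Finset.sum_congr rfl fun j hj => by
        rw [Function.update_of_ne (Finset.ne_of_mem_erase hj)]
    have e2 : ∑ j, F j (xstar j)
        = ∑ j ∈ Finset.univ.erase i, F j (xstar j) + F i (xstar i) :=
      (Finset.sum_erase_add _ _ (Finset.mem_univ i)).symm
    have e3 : ∑ j, F j (Function.update xstar i t j)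
        = ∑ j ∈ Finset.univ.erase i, F j (xstar j) + F i t := by
      rw [← Finset.sum_erase_add Finset.univ _ (Finset.mem_univ i), e1]
      congr 1
      rw [Function.update_self]
    rw [e2, e3] at h'
    linarith
  have hw : (0:ℝ) < lam * μ / (|xstar i| + ε i) ^ (1 - p) := by
    have := hd i; positivity
  have hmin : ∀ t : ℝ, (xstar i - B xstar i)^2
      + (lam * μ / (|xstar i| + ε i) ^ (1 - p)) * |xstar i|
      ≤ (t - B xstar i)^2 + (lam * μ / (|xstar i| + ε i) ^ (1 - p)) * |t| := by
    intro t
    have := hkey2 t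
    simp only [hF] at this
    calc (xstar i - B xstar i)^2 + (lam * μ / (|xstar i| + ε i) ^ (1 - p)) * |xstar i|
        = (xstar i - B xstar i)^2 + lam * μ * (|xstar i| / (|xstar i| + ε i) ^ (1 - p)) := by
          ring
      _ ≤ (t - B xstar i)^2 + lam * μ * (|t| / (|xstar i| + ε i) ^ (1 - p)) := this
      _ = (t - B xstar i)^2 + (lam * μ / (|xstar i| + ε i) ^ (1 - p)) * |t| := by ring
  have hfin := scalar_min hw hmin
  rw [div_div, mul_comm ((|xstar i| + ε i) ^ (1 - p)) 2] at hfin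
  exact hfin
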